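/- Let H ≥ 1 and define α_t = (H+1)/(H+t) for t ≥ 1, α_t^0 = ∏_{j=1}^t (1-α_j), and α_t^i = α_i ∏_{j=i+1}^t (1-α_j) for 1 ≤ i ≤ t. Then for every t ≥ 1, 1/√t ≤ ∑_{i=1}^t α_t^i/√i ≤ 2/√t. -/

import Mathlib

/-- Learning rate α_t = (H+1)/(H+t). -/
noncomputable def lrate (H t : ℕ) : ℝ := (H + 1) / (H + t)

/-- Cumulative weight α_t^i = α_i ∏_{j=i+1}^t (1 - α_j). -/
noncomputable def lweight (H i t : ℕ) : ℝ :=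
  lrate H i * ∏ j ∈ Finset.Icc (i + 1) t, (1 - lrate H j)

lemma sum_rec (H t : ℕ) :
    ∑ i ∈ Finset.Icc 1 (t+1), lweight H i (t+1) / Real.sqrt i
      = (1 - lrate H (t+1)) * ∑ i ∈ Finset.Icc 1 t, lweight H i t / Real.sqrt i
        + lrate H (t+1) / Real.sqrt ((t:ℝ)+1) := by
  rw [Finset.sum_Icc_succ_top (by omega), Finset.mul_sum]
  congr 1
  · apply Finset.sum_congr rfl
    intro i hi
    simp only [Finset.mem_Icc] at hi
    unfold lweight
    rw [Finset.prod_Icc_succ_top (by omega)]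
    ring
  · unfold lweight
    rw [Finset.Icc_eq_empty (by omega), Finset.prod_empty, mul_one]
    push_cast
    ring

theorem stmt0 (H : ℕ) (hH : 1 ≤ H) (t : ℕ) (ht : 1 ≤ t) :
    1 / Real.sqrt t ≤ ∑ i ∈ Finset.Icc 1 t, lweight H i t / Real.sqrt i ∧
    ∑ i ∈ Finset.Icc 1 t, lweight H i t / Real.sqrt i ≤ 2 / Real.sqrt t := by
  induction t, ht using Nat.le_induction with
  | base =>
    have h1 : lweight H 1 1 = 1 := by
      unfold lweight lrate
      rw [Finset.Icc_eq_empty (by omega), Finset.prod_empty, mul_one]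
      rw [div_eq_one_iff_eq (by positivity)]
      norm_num
    simp [h1]
  | succ t ht IH =>
    obtain ⟨h1, h2⟩ := IH
    rw [sum_rec H t]
    have htR : (1:ℝ) ≤ (t:ℝ) := by exact_mod_cast ht
    have hHR : (1:ℝ) ≤ (H:ℝ) := by exact_mod_cast hH
    set S := ∑ i ∈ Finset.Icc 1 t, lweight H i t / Real.sqrt i with hS
    set a := Real.sqrt t with ha
    set b := Real.sqrt ((t:ℝ)+1) with hb
    have hb' : Real.sqrt ((t+1:ℕ):ℝ) = b := by push_cast; rfl
    rw [hb']
    have ha2 : a^2 = t := Real.sq_sqrt (by linarith)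
    have hb2 : b^2 = (t:ℝ)+1 := Real.sq_sqrt (by linarith)
    have hapos : 0 < a := Real.sqrt_pos.mpr (by linarith)
    have hbpos : 0 < b := Real.sqrt_pos.mpr (by linarith)
    have hab : a ≤ b := Real.sqrt_le_sqrt (by linarith)
    have hα : lrate H (t+1) = ((H:ℝ)+1)/((H:ℝ)+t+1) := by
      unfold lrate; push_cast; ring_nf
    have hαpos : 0 < lrate H (t+1) := by rw [hα]; positivity
    have hαle : lrate H (t+1) ≤ 1 := by
      rw [hα, div_le_one (by linarith)]; linarith
    constructor
    · have key : 1 / b ≤ S := le_trans (one_div_le_one_div_of_le hapos hab) h1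
      have hmul := mul_le_mul_of_nonneg_left key
        (by linarith : (0:ℝ) ≤ 1 - lrate H (t+1))
      have heq : (1 - lrate H (t+1)) * (1/b) + lrate H (t+1) / b = 1 / b := by ring
      linarith
    · have hc : (0:ℝ) < (H:ℝ)+t+1 := by linarith
      have h2ab : 2*a*b ≤ 2*(t:ℝ)+1 := by nlinarith [sq_nonneg (a-b)]
      have key2 : 2*(t:ℝ)*b + ((H:ℝ)+1)*a ≤ 2*((H:ℝ)+t+1)*a := by
        nlinarith [mul_le_mul_of_nonneg_left h2ab hapos.le]
      have step : (1 - lrate H (t+1)) * (2 / a) + lrate H (t+1) / b ≤ 2 / b := by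
        rw [hα]
        have hrw : (1 - ((H:ℝ)+1)/((H:ℝ)+t+1)) * (2 / a) + (((H:ℝ)+1)/((H:ℝ)+t+1)) / b
            = (2*(t:ℝ)*b + ((H:ℝ)+1)*a) / (((H:ℝ)+t+1)*a*b) := by
          field_simp
          ring
        rw [hrw, div_le_div_iff₀ (by positivity) hbpos]
        nlinarith [mul_le_mul_of_nonneg_right key2 hbpos.le]
      have hmul := mul_le_mul_of_nonneg_left h2
        (by linarith : (0:ℝ) ≤ 1 - lrate H (t+1))
      linarith
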